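/- For every δ > 0 and every η > 0 there exists Q₀ such that for all real Q ≥ Q₀, every positive integer n with n ≤ Q, and every real z with 1 ≤ z ≤ Q^δ, the number of divisors of n that are at most z satisfies τ(n, z) ≤ exp((δ'·log(1/δ') + (1−δ')·log(1/(1−δ')) + η)·(log Q)/(log log Q)), where δ' = min(δ, 1/2). -/

import Mathlib

open Finset Real Filter


lemma aux_choose_le (N i : ℕ) (p : ℝ) (hp : 0 < p) (hp1 : p < 1) (hiN : i ≤ N) :
    (N.choose i : ℝ) ≤ Real.exp ((i : ℝ) * Real.log (1/p) + ((N : ℝ) - i) * Real.log (1/(1-p))) := by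
  have hq : 0 < 1 - p := by linarith
  have key : p ^ i * (1-p) ^ (N - i) * (N.choose i : ℝ) ≤ 1 := by
    have h1 : ((p + (1-p)) ^ N : ℝ) = ∑ k ∈ range (N+1), p ^ k * (1-p) ^ (N-k) * (N.choose k : ℝ) :=
      add_pow p (1-p) N
    have h2 : p ^ i * (1-p) ^ (N - i) * (N.choose i : ℝ) ≤
        ∑ k ∈ range (N+1), p ^ k * (1-p) ^ (N-k) * (N.choose k : ℝ) := by
      refine Finset.single_le_sum (f := fun k => p ^ k * (1-p) ^ (N-k) * (N.choose k : ℝ)) ?_ ?_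
      · intro k _; positivity
      · exact mem_range.mpr (Nat.lt_succ_of_le hiN)
    calc p ^ i * (1-p) ^ (N - i) * (N.choose i : ℝ)
        ≤ ∑ k ∈ range (N+1), p ^ k * (1-p) ^ (N-k) * (N.choose k : ℝ) := h2
      _ = ((p + (1-p)) ^ N : ℝ) := h1.symm
      _ = 1 := by norm_num
  have hpi : (0:ℝ) < p ^ i * (1-p) ^ (N - i) := by positivity
  have h3 : (N.choose i : ℝ) ≤ (p ^ i * (1-p) ^ (N - i))⁻¹ := by
    rw [← one_div, le_div_iff₀ hpi]
    linarith [key]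
  refine h3.trans (le_of_eq ?_)
  rw [mul_inv, ← Real.exp_log (x := (p ^ i)⁻¹) (by positivity),
      ← Real.exp_log (x := ((1-p) ^ (N-i))⁻¹) (by positivity), ← Real.exp_add]
  congr 1
  rw [Real.log_inv, Real.log_inv, Real.log_pow, Real.log_pow]
  have hc : ((N - i : ℕ) : ℝ) = (N : ℝ) - i := by rw [Nat.cast_sub hiN]
  rw [hc]
  have l1 : Real.log (1/p) = - Real.log p := by rw [one_div, Real.log_inv]
  have l2 : Real.log (1/(1-p)) = - Real.log (1-p) := by rw [one_div, Real.log_inv]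
  rw [l1, l2]; ring

lemma aux_sum_choose_le (N J : ℕ) (p : ℝ) (hp : 0 < p) (hp2 : p ≤ 1/2) (hJ : (J:ℝ) ≤ p * N) :
    ∑ i ∈ range (J+1), (N.choose i : ℝ) ≤
      (J+1) * Real.exp ((N:ℝ) * (p * Real.log (1/p) + (1-p) * Real.log (1/(1-p)))) := by
  have hp1 : p < 1 := by linarith
  have hq : 0 < 1 - p := by linarith
  have hlog : Real.log (1/(1-p)) ≤ Real.log (1/p) := by
    apply Real.log_le_log (by positivity)
    rw [div_le_div_iff₀ hq hp]; linarith
  have hlogq : 0 ≤ Real.log (1/(1-p)) := by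
    apply Real.log_nonneg
    rw [le_div_iff₀ hq]; linarith
  have hmain : ∀ i ∈ range (J+1), (N.choose i : ℝ) ≤
      Real.exp ((N:ℝ) * (p * Real.log (1/p) + (1-p) * Real.log (1/(1-p)))) := by
    intro i hi
    have hiJn : i ≤ J := Nat.lt_succ_iff.mp (mem_range.mp hi)
    have hiJ : (i:ℝ) ≤ J := by exact_mod_cast hiJn
    have hiN : (i:ℝ) ≤ (N:ℝ) := by
      calc (i:ℝ) ≤ p * N := le_trans hiJ hJ
        _ ≤ 1 * N := by nlinarith [(Nat.cast_nonneg N : (0:ℝ) ≤ N)]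
        _ = N := one_mul _
    have hiN' : i ≤ N := by exact_mod_cast hiN
    refine (aux_choose_le N i p hp hp1 hiN').trans ?_
    apply Real.exp_le_exp.mpr
    have hip : (i:ℝ) ≤ p * N := le_trans hiJ hJ
    nlinarith [hip, hlog, hlogq]
  calc ∑ i ∈ range (J+1), (N.choose i : ℝ)
      ≤ ∑ _i ∈ range (J+1), Real.exp ((N:ℝ) * (p * Real.log (1/p) + (1-p) * Real.log (1/(1-p)))) :=
        Finset.sum_le_sum hmain
    _ = (J+1) * Real.exp ((N:ℝ) * (p * Real.log (1/p) + (1-p) * Real.log (1/(1-p)))) := by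
        rw [Finset.sum_const, Finset.card_range]; push_cast; ring

lemma aux_sum_choose_all (N : ℕ) :
    ∑ i ∈ range (N+1), (N.choose i : ℝ) ≤
      Real.exp ((N:ℝ) * ((1/2) * Real.log (1/(1/2)) + (1-(1/2)) * Real.log (1/(1-(1/2))))) := by
  have h1 : ∑ i ∈ range (N+1), (N.choose i : ℝ) = (2:ℝ)^N := by
    rw [← Nat.cast_sum]
    rw [Nat.sum_range_choose]
    push_cast; ring
  rw [h1]
  have : (1:ℝ)/(1/2) = 2 := by norm_num
  rw [this]
  have h2 : (1:ℝ) - 1/2 = 1/2 := by norm_num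
  rw [h2, this]
  have : (1/2 : ℝ) * Real.log 2 + (1/2) * Real.log 2 = Real.log 2 := by ring
  rw [this, ← Real.log_pow, Real.exp_log (by positivity)]


def smPart (Y d : ℕ) : ℕ := ∏ p ∈ d.primeFactors.filter (fun p => p ≤ Y), p ^ d.factorization p

lemma smPart_dvd (Y d : ℕ) : smPart Y d ∣ d := by
  rcases eq_or_ne d 0 with rfl | hd
  · simp [smPart]
  · have h1 : ∏ p ∈ d.primeFactors, p ^ d.factorization p = d := by
      conv_rhs => rw [← Nat.factorization_prod_pow_eq_self hd]
      rw [Finsupp.prod, Nat.support_factorization]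
    calc smPart Y d ∣ ∏ p ∈ d.primeFactors, p ^ d.factorization p :=
          Finset.prod_dvd_prod_of_subset _ _ _ (Finset.filter_subset _ _)
      _ = d := h1

lemma smPart_ne_zero (Y d : ℕ) : smPart Y d ≠ 0 := by
  apply Finset.prod_ne_zero_iff.mpr
  intro p hp
  have hp' : p.Prime := Nat.prime_of_mem_primeFactors (Finset.mem_filter.mp hp).1
  exact pow_ne_zero _ hp'.ne_zero

lemma factorization_smPart (Y : ℕ) {d : ℕ} (q : ℕ) :
    (smPart Y d).factorization q =
      if q ∈ d.primeFactors.filter (fun p => p ≤ Y) then d.factorization q else 0 := by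
  rw [smPart, Nat.factorization_prod]
  · rw [Finset.sum_apply']
    rw [Finset.sum_congr rfl (fun p hp => ?_)]
    · exact Finset.sum_ite_eq' _ q (fun p => d.factorization p)
    · have hp' : p.Prime := Nat.prime_of_mem_primeFactors (Finset.mem_filter.mp hp).1
      rw [hp'.factorization_pow, Finsupp.single_apply]
  · intro p hp
    have hp' : p.Prime := Nat.prime_of_mem_primeFactors (Finset.mem_filter.mp hp).1
    exact pow_ne_zero _ hp'.ne_zero

lemma smPart_primes_le (Y d q : ℕ) (hq : q.Prime) (hdvd : q ∣ smPart Y d) : q ≤ Y := by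
  have h1 : 1 ≤ (smPart Y d).factorization q := by
    rw [← hq.pow_dvd_iff_le_factorization (smPart_ne_zero Y d), pow_one]
    exact hdvd
  rw [factorization_smPart] at h1
  by_contra h
  rw [if_neg] at h1
  · omega
  · intro hmem
    exact h (Finset.mem_filter.mp hmem).2

lemma roughPart_primes_gt (Y : ℕ) {d : ℕ} (hd : d ≠ 0) (q : ℕ) (hq : q.Prime)
    (hdvd : q ∣ d / smPart Y d) : Y < q := by
  by_contra h
  push_neg at h
  have hsd := smPart_dvd Y d
  have hrne : d / smPart Y d ≠ 0 := by
    intro h0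
    exact hd (by simpa [h0] using (Nat.div_mul_cancel hsd).symm)
  have h1 : 1 ≤ (d / smPart Y d).factorization q := by
    rw [← hq.pow_dvd_iff_le_factorization hrne, pow_one]; exact hdvd
  rw [Nat.factorization_div hsd] at h1
  simp only [Finsupp.tsub_apply] at h1
  rw [factorization_smPart] at h1
  by_cases hmem : q ∈ d.primeFactors.filter (fun p => p ≤ Y)
  · rw [if_pos hmem] at h1; omega
  · rw [if_neg hmem] at h1
    have hqd : q ∣ d := hdvd.trans (Nat.div_dvd_of_dvd hsd)
    have : q ∈ d.primeFactors.filter (fun p => p ≤ Y) := by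
      rw [Finset.mem_filter, Nat.mem_primeFactors]
      exact ⟨⟨hq, hqd, hd⟩, h⟩
    exact hmem this

lemma smPart_factorization_eq_zero_of_gt (Y : ℕ) {d : ℕ} (q : ℕ) (hqY : Y < q) :
    (smPart Y d).factorization q = 0 := by
  rw [factorization_smPart, if_neg]
  intro hmem
  exact absurd (Finset.mem_filter.mp hmem).2 (by omega)

lemma ms_card_sum {ι α : Type*} (s : Finset ι) (f : ι → Multiset α) :
    Multiset.card (∑ i ∈ s, f i) = ∑ i ∈ s, Multiset.card (f i) := by
  classical
  induction s using Finset.induction with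
  | empty => simp
  | insert _ _ h ih => rw [Finset.sum_insert h, Finset.sum_insert h, Multiset.card_add, ih]

-- the split
lemma split_card (n Y : ℕ) (hn : n ≠ 0) (z : ℝ) :
    (n.divisors.filter (fun d : ℕ => (d : ℝ) ≤ z)).card ≤
      (n.divisors.filter (fun s : ℕ => ∀ q ∈ s.primeFactors, q ≤ Y)).card *
      (n.divisors.filter (fun t : ℕ => (∀ q ∈ t.primeFactors, Y < q) ∧ (t : ℝ) ≤ z)).card := by
  classical
  set A := n.divisors.filter (fun s : ℕ => ∀ q ∈ s.primeFactors, q ≤ Y) with hA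
  set B := n.divisors.filter (fun t : ℕ => (∀ q ∈ t.primeFactors, Y < q) ∧ (t : ℝ) ≤ z) with hB
  rw [← Finset.card_product]
  apply Finset.card_le_card_of_injOn (fun d => (smPart Y d, d / smPart Y d))
  · intro d hd
    rw [Finset.mem_coe, Finset.mem_filter, Nat.mem_divisors] at hd
    obtain ⟨⟨hdn, _⟩, hdz⟩ := hd
    have hd0 : d ≠ 0 := by
      rintro rfl; exact hn (Nat.eq_zero_of_zero_dvd hdn)
    rw [Finset.mem_coe, Finset.mem_product]
    constructor
    · rw [hA, Finset.mem_filter, Nat.mem_divisors]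
      refine ⟨⟨(smPart_dvd Y d).trans hdn, hn⟩, ?_⟩
      intro q hq
      exact smPart_primes_le Y d q (Nat.prime_of_mem_primeFactors hq)
        (Nat.dvd_of_mem_primeFactors hq)
    · rw [hB, Finset.mem_filter, Nat.mem_divisors]
      refine ⟨⟨(Nat.div_dvd_of_dvd (smPart_dvd Y d)).trans hdn, hn⟩, ?_, ?_⟩
      · intro q hq
        exact roughPart_primes_gt Y hd0 q (Nat.prime_of_mem_primeFactors hq)
          (Nat.dvd_of_mem_primeFactors hq)
      · calc ((d / smPart Y d : ℕ) : ℝ) ≤ (d : ℝ) := by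
              exact_mod_cast Nat.div_le_self d (smPart Y d)
          _ ≤ z := hdz
  · intro d1 h1 d2 h2 heq
    have e1 : smPart Y d1 = smPart Y d2 := congrArg Prod.fst heq
    have e2 : d1 / smPart Y d1 = d2 / smPart Y d2 := congrArg Prod.snd heq
    have c1 : smPart Y d1 * (d1 / smPart Y d1) = d1 := Nat.mul_div_cancel' (smPart_dvd Y d1)
    have c2 : smPart Y d2 * (d2 / smPart Y d2) = d2 := Nat.mul_div_cancel' (smPart_dvd Y d2)
    rw [← c1, ← c2, e2, e1]

-- smooth count
lemma smooth_card (n Y E : ℕ) (hn : n ≠ 0) (hE : ∀ p, n.factorization p ≤ E) :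
    (n.divisors.filter (fun s : ℕ => ∀ q ∈ s.primeFactors, q ≤ Y)).card ≤
      (E + 1) ^ (Y + 1) := by
  classical
  have hsub : n.divisors.filter (fun s : ℕ => ∀ q ∈ s.primeFactors, q ≤ Y) ⊆
      (smPart Y n).divisors := by
    intro s hs
    rw [Finset.mem_filter, Nat.mem_divisors] at hs
    obtain ⟨⟨hsn, _⟩, hsml⟩ := hs
    have hs0 : s ≠ 0 := by rintro rfl; exact hn (Nat.eq_zero_of_zero_dvd hsn)
    rw [Nat.mem_divisors]
    refine ⟨?_, smPart_ne_zero Y n⟩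
    rw [← Nat.factorization_le_iff_dvd hs0 (smPart_ne_zero Y n)]
    intro q
    by_cases hq : s.factorization q = 0
    · simp [hq]
    · have hqmem : q ∈ s.primeFactors := by
        rw [← Nat.support_factorization]; exact Finsupp.mem_support_iff.mpr hq
      have hqp : q.Prime := Nat.prime_of_mem_primeFactors hqmem
      have hqY : q ≤ Y := hsml q hqmem
      have hsmn : (smPart Y n).factorization q = n.factorization q := by
        have : q ∈ n.primeFactors.filter (fun p => p ≤ Y) := by
          rw [Finset.mem_filter, Nat.mem_primeFactors]
          exact ⟨⟨hqp, (Nat.dvd_of_mem_primeFactors hqmem).trans hsn, hn⟩, hqY⟩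
        rw [factorization_smPart, if_pos this]
      rw [hsmn]
      have : s.factorization ≤ n.factorization := (Nat.factorization_le_iff_dvd hs0 hn).mpr hsn
      exact this q
  calc (n.divisors.filter (fun s : ℕ => ∀ q ∈ s.primeFactors, q ≤ Y)).card
      ≤ (smPart Y n).divisors.card := Finset.card_le_card hsub
    _ = ∏ p ∈ (smPart Y n).primeFactors, ((smPart Y n).factorization p + 1) :=
        Nat.card_divisors (smPart_ne_zero Y n)
    _ ≤ ∏ _p ∈ (smPart Y n).primeFactors, (E + 1) := by
        apply Finset.prod_le_prod'
        intro p hp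
        have : (smPart Y n).factorization p ≤ n.factorization p := by
          have := (Nat.factorization_le_iff_dvd (smPart_ne_zero Y n) hn).mpr (smPart_dvd Y n)
          exact this p
        exact Nat.succ_le_succ (this.trans (hE p))
    _ = (E + 1) ^ (smPart Y n).primeFactors.card := Finset.prod_const _
    _ ≤ (E + 1) ^ (Y + 1) := by
        apply Nat.pow_le_pow_right (Nat.succ_le_succ (Nat.zero_le E))
        have hsub2 : (smPart Y n).primeFactors ⊆ Finset.range (Y + 1) := by
          intro q hq
          rw [Finset.mem_range]
          have := smPart_primes_le Y n q (Nat.prime_of_mem_primeFactors hq)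
            (Nat.dvd_of_mem_primeFactors hq)
          omega
        calc (smPart Y n).primeFactors.card ≤ (Finset.range (Y+1)).card :=
              Finset.card_le_card hsub2
          _ = Y + 1 := Finset.card_range _

-- rough count
lemma rough_card (n Y J N : ℕ) (hn : n ≠ 0) (z : ℝ)
    (hJ : ∀ t ∈ n.divisors.filter
      (fun t : ℕ => (∀ q ∈ t.primeFactors, Y < q) ∧ (t : ℝ) ≤ z),
      t.primeFactorsList.length ≤ J)
    (hN : (n / smPart Y n).primeFactorsList.length ≤ N) :
    (n.divisors.filter (fun t : ℕ => (∀ q ∈ t.primeFactors, Y < q) ∧ (t : ℝ) ≤ z)).card ≤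
      ∑ i ∈ range (J+1), N.choose i := by
  classical
  set nr := n / smPart Y n with hnr
  have hnr0 : nr ≠ 0 := by
    intro h0
    have := Nat.mul_div_cancel' (smPart_dvd Y n)
    rw [← hnr, h0, mul_zero] at this
    exact hn this.symm
  set m : Multiset ℕ := (nr.primeFactorsList : Multiset ℕ) with hm
  set M : Multiset (Multiset ℕ) := ∑ i ∈ range (J+1), Multiset.powersetCard i m with hM
  set B := n.divisors.filter (fun t : ℕ => (∀ q ∈ t.primeFactors, Y < q) ∧ (t : ℝ) ≤ z) with hB
  have step1 : B.card ≤ M.toFinset.card := by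
    apply Finset.card_le_card_of_injOn (fun t => (t.primeFactorsList : Multiset ℕ))
    · intro t ht
      have htB := ht
      rw [hB, Finset.mem_coe, Finset.mem_filter, Nat.mem_divisors] at htB
      obtain ⟨⟨htn, _⟩, hrough, htz⟩ := htB
      have ht0 : t ≠ 0 := by rintro rfl; exact hn (Nat.eq_zero_of_zero_dvd htn)
      have htnr : t ∣ nr := by
        rw [← Nat.factorization_le_iff_dvd ht0 hnr0]
        intro q
        by_cases hq : t.factorization q = 0
        · simp [hq]
        · have hqmem : q ∈ t.primeFactors := by
            rw [← Nat.support_factorization]; exact Finsupp.mem_support_iff.mpr hq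
          have hqY : Y < q := hrough q hqmem
          have : nr.factorization q = n.factorization q - (smPart Y n).factorization q := by
            rw [hnr, Nat.factorization_div (smPart_dvd Y n)]; rfl
          rw [this, smPart_factorization_eq_zero_of_gt Y q hqY, Nat.sub_zero]
          exact (Nat.factorization_le_iff_dvd ht0 hn).mpr htn q
      rw [Finset.mem_coe, Multiset.mem_toFinset, hM, Multiset.mem_sum]
      refine ⟨t.primeFactorsList.length, ?_, ?_⟩
      · rw [Finset.mem_range]; exact Nat.lt_succ_of_le (hJ t ht)
      · rw [Multiset.mem_powersetCard]
        constructor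
        · rw [Multiset.le_iff_count]
          intro q
          rw [hm, Multiset.coe_count, Multiset.coe_count,
            Nat.primeFactorsList_count_eq, Nat.primeFactorsList_count_eq]
          exact (Nat.factorization_le_iff_dvd ht0 hnr0).mpr htnr q
        · simp
    · intro t1 h1 t2 h2 heq
      have h1' : t1 ∈ B := h1
      have h2' : t2 ∈ B := h2
      rw [hB, Finset.mem_filter, Nat.mem_divisors] at h1' h2'
      have ht10 : t1 ≠ 0 := by
        rintro rfl; exact hn (Nat.eq_zero_of_zero_dvd h1'.1.1)
      have ht20 : t2 ≠ 0 := by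
        rintro rfl; exact hn (Nat.eq_zero_of_zero_dvd h2'.1.1)
      have : t1.primeFactorsList.prod = t2.primeFactorsList.prod := by
        have := congrArg Multiset.prod heq
        simpa using this
      rw [Nat.prod_primeFactorsList ht10, Nat.prod_primeFactorsList ht20] at this
      exact this
  have step2 : M.toFinset.card ≤ Multiset.card M := Multiset.toFinset_card_le M
  have step3 : Multiset.card M = ∑ i ∈ range (J+1), (Multiset.card m).choose i := by
    rw [hM, ms_card_sum]
    exact Finset.sum_congr rfl (fun i _ => Multiset.card_powersetCard i m)
  have step4 : ∑ i ∈ range (J+1), (Multiset.card m).choose i ≤ ∑ i ∈ range (J+1), N.choose i := by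
    apply Finset.sum_le_sum
    intro i _
    apply Nat.choose_le_choose
    rw [hm, Multiset.coe_card]
    exact hN
  omega


lemma ev_pow_log_le (n : ℕ) (c : ℝ) (hc : 0 < c) :
    ∀ᶠ x in atTop, (Real.log x)^n ≤ c * x := by
  have T := Real.tendsto_pow_log_div_mul_add_atTop 1 0 n one_ne_zero
  have h1 : ∀ᶠ x in atTop, (Real.log x)^n / (1 * x + 0) ≤ c :=
    T.eventually (eventually_le_nhds hc)
  filter_upwards [h1, eventually_ge_atTop (1:ℝ)] with x hx hx1
  have hx0 : (0:ℝ) < x := by linarith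
  rw [one_mul, add_zero, div_le_iff₀ hx0] at hx
  calc (Real.log x)^n ≤ c * x := hx

lemma rough_len_bound {t Y : ℕ} (ht : t ≠ 0) (hr : ∀ q ∈ t.primeFactors, Y < q) :
    (Y+1) ^ t.primeFactorsList.length ≤ t := by
  have h1 : ∀ x ∈ (t.primeFactorsList : Multiset ℕ), Y + 1 ≤ x := by
    intro x hx
    have hx' : x ∈ t.primeFactorsList := by exact_mod_cast hx
    have hxp : x.Prime := Nat.prime_of_mem_primeFactorsList hx'
    have hxd : x ∣ t := Nat.dvd_of_mem_primeFactorsList hx'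
    have : x ∈ t.primeFactors := Nat.mem_primeFactors.mpr ⟨hxp, hxd, ht⟩
    exact hr x this
  have h2 := Multiset.pow_card_le_prod (s := (t.primeFactorsList : Multiset ℕ)) (a := Y+1) h1
  rw [Multiset.coe_card, Multiset.prod_coe, Nat.prod_primeFactorsList ht] at h2
  exact h2

set_option maxHeartbeats 1000000 in
/-- For every δ > 0 and every η > 0 there exists Q₀ such that for all real Q ≥ Q₀,
every positive integer n ≤ Q and every real z with 1 ≤ z ≤ Q^δ, the number τ(n,z)
of divisors of n that are at most z satisfies
τ(n,z) ≤ exp((δ'·log(1/δ') + (1−δ')·log(1/(1−δ')) + η)·(log Q)/(log log Q)),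
where δ' = min(δ, 1/2). -/
theorem stmt_9 :
    ∀ δ : ℝ, 0 < δ → ∀ η : ℝ, 0 < η → ∃ Q₀ : ℝ, ∀ Q : ℝ, Q₀ ≤ Q →
      ∀ n : ℕ, 0 < n → (n : ℝ) ≤ Q →
        ∀ z : ℝ, 1 ≤ z → z ≤ Q ^ δ →
        ((n.divisors.filter (fun d : ℕ => (d : ℝ) ≤ z)).card : ℝ) ≤
          Real.exp ((min δ (1 / 2) * Real.log (1 / min δ (1 / 2)) +
              (1 - min δ (1 / 2)) * Real.log (1 / (1 - min δ (1 / 2))) + η) *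
            (Real.log Q / Real.log (Real.log Q))) := by
  intro δ hδ η hη
  set p : ℝ := min δ (1 / 2) with hpdef
  have hp0 : 0 < p := lt_min hδ (by norm_num)
  have hp2 : p ≤ 1/2 := min_le_right _ _
  have hp1 : p < 1 := by linarith
  have hq0 : 0 < 1 - p := by linarith
  set H : ℝ := p * Real.log (1 / p) + (1 - p) * Real.log (1 / (1 - p)) with hHdef
  have hH0 : 0 ≤ H := by
    apply add_nonneg
    · exact mul_nonneg hp0.le (Real.log_nonneg (by rw [le_div_iff₀ hp0]; linarith))
    · exact mul_nonneg hq0.le (Real.log_nonneg (by rw [le_div_iff₀ hq0]; linarith))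
  have hH1 : H ≤ 1 := by
    have l1 : Real.log (1/p) ≤ 1/p - 1 := Real.log_le_sub_one_of_pos (by positivity)
    have l2 : Real.log (1/(1-p)) ≤ 1/(1-p) - 1 := Real.log_le_sub_one_of_pos (by positivity)
    have e1 : p * (1/p - 1) = 1 - p := by field_simp
    have e2 : (1-p) * (1/(1-p) - 1) = p := by field_simp; ring
    have m1 := mul_le_mul_of_nonneg_left l1 hp0.le
    have m2 := mul_le_mul_of_nonneg_left l2 hq0.le
    rw [e1] at m1; rw [e2] at m2
    rw [hHdef]; linarith
  clear_value p H
  -- eventual conditions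
  have F3' : ∀ᶠ x in atTop, (1:ℝ) ≤ Real.log x - 3 * Real.log (Real.log x) := by
    have hev : ∀ᶠ u in atTop, (1:ℝ) ≤ u - 3 * Real.log u := by
      filter_upwards [ev_pow_log_le 1 (1/6) (by norm_num), eventually_ge_atTop (2:ℝ)] with u h1 h2
      rw [pow_one] at h1; linarith
    exact Real.tendsto_log_atTop.eventually hev
  have F4 : ∀ᶠ x in atTop, 3 * (Real.log x)^2 ≤ (η/8) * x := by
    filter_upwards [ev_pow_log_le 2 (η/24) (by positivity)] with x h1
    linarith
  have F5 : ∀ᶠ x in atTop, (24:ℝ) ≤ η * Real.log x := by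
    have : ∀ᶠ x in atTop, (24/η : ℝ) ≤ x := eventually_ge_atTop _
    filter_upwards [Real.tendsto_log_atTop.eventually this] with x h1
    rw [div_le_iff₀ hη] at h1; linarith
  have F6 : ∀ᶠ x in atTop, (3 + (3/4)*η) * Real.log (Real.log x) ≤ (η/4) * Real.log x := by
    have hc : (0:ℝ) < (η/4)/(3 + (3/4)*η) := by positivity
    have hev : ∀ᶠ u in atTop, (3 + (3/4)*η) * Real.log u ≤ (η/4) * u := by
      filter_upwards [ev_pow_log_le 1 _ hc, eventually_ge_atTop (0:ℝ)] with u h1 _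
      rw [pow_one] at h1
      have h3 : (0:ℝ) < 3 + (3/4)*η := by positivity
      calc (3 + (3/4)*η) * Real.log u ≤ (3 + (3/4)*η) * ((η/4)/(3 + (3/4)*η) * u) :=
            mul_le_mul_of_nonneg_left h1 h3.le
        _ = (η/4) * u := by field_simp
    exact Real.tendsto_log_atTop.eventually hev
  have FL1 : ∀ᶠ x : ℝ in atTop, (1:ℝ) ≤ x := eventually_ge_atTop _
  have G : ∀ᶠ Q in atTop, (1:ℝ) ≤ Q ∧ ((1:ℝ) ≤ Real.log Q ∧
      ((1:ℝ) ≤ Real.log (Real.log Q) ∧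
      ((1:ℝ) ≤ Real.log (Real.log Q) - 3 * Real.log (Real.log (Real.log Q)) ∧
      (3 * (Real.log (Real.log Q))^2 ≤ (η/8) * Real.log Q ∧
      ((24:ℝ) ≤ η * Real.log (Real.log Q) ∧
      (3 + (3/4)*η) * Real.log (Real.log (Real.log Q)) ≤ (η/4) * Real.log (Real.log Q)))))) :=
    FL1.and (Real.tendsto_log_atTop.eventually
      (FL1.and ((Real.tendsto_log_atTop.eventually FL1).and (F3'.and (F4.and (F5.and F6))))))
  obtain ⟨Q₀, hQ₀⟩ := eventually_atTop.mp G
  refine ⟨Q₀, ?_⟩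
  intro Q hQ n hn hnQ z hz1 hzQ
  obtain ⟨hQ1, hL1, hu1, hc3, f4, f5, f6⟩ := hQ₀ Q hQ
  set L : ℝ := Real.log Q with hLdef
  set u : ℝ := Real.log L with hudef
  set v : ℝ := Real.log u with hvdef
  have hQpos : (0:ℝ) < Q := by linarith
  have hL0 : (0:ℝ) < L := by linarith
  have hu0 : (0:ℝ) < u := by linarith
  have hv0 : (0:ℝ) ≤ v := Real.log_nonneg hu1
  have huv : (0:ℝ) < u - 3*v := by linarith
  have hn0 : n ≠ 0 := hn.ne'
  have hn1 : (1:ℝ) ≤ (n:ℝ) := by exact_mod_cast hn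
  have hlogn : Real.log n ≤ L := Real.log_le_log (by linarith) hnQ
  have hlogz : Real.log z ≤ δ * L := by
    have h := Real.log_le_log (by linarith : (0:ℝ) < z) hzQ
    rwa [Real.log_rpow hQpos] at h
  set Y : ℕ := ⌊L/u^3⌋₊ with hYdef
  set N : ℕ := ⌈L/(u-3*v)⌉₊ with hNdef
  set E : ℕ := Nat.log 2 n with hEdef
  have hLu3 : (0:ℝ) < L/u^3 := by positivity
  have hYlog : u - 3*v ≤ Real.log ((Y:ℝ)+1) := by
    have h1 : L/u^3 < (Y:ℝ)+1 := Nat.lt_floor_add_one _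
    have h2 : Real.log (L/u^3) ≤ Real.log ((Y:ℝ)+1) := Real.log_le_log hLu3 h1.le
    rwa [Real.log_div (ne_of_gt hL0) (by positivity), Real.log_pow, Nat.cast_ofNat] at h2
  have hNge : L/(u-3*v) ≤ (N:ℝ) := Nat.le_ceil _
  have hNle : (N:ℝ) ≤ L/(u-3*v) + 1 := (Nat.ceil_lt_add_one (by positivity)).le
  have hYle : (Y:ℝ) ≤ L/u^3 := Nat.floor_le hLu3.le
  -- length bounds
  have key_len : ∀ m : ℕ, m ≠ 0 → (∀ q ∈ m.primeFactors, Y < q) → ∀ w : ℝ, (m:ℝ) ≤ w →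
      (m.primeFactorsList.length : ℝ) * (u - 3*v) ≤ Real.log w := by
    intro m hm hrough w hw
    have h1 := rough_len_bound hm hrough
    have h2 : ((Y:ℝ)+1) ^ m.primeFactorsList.length ≤ w := by
      calc ((Y:ℝ)+1) ^ m.primeFactorsList.length = (((Y+1)^m.primeFactorsList.length : ℕ) : ℝ) := by
            push_cast; ring
        _ ≤ (m:ℝ) := by exact_mod_cast h1
        _ ≤ w := hw
    have h3 : Real.log (((Y:ℝ)+1) ^ m.primeFactorsList.length) ≤ Real.log w :=
      Real.log_le_log (by positivity) h2
    rw [Real.log_pow] at h3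
    calc (m.primeFactorsList.length : ℝ) * (u - 3*v)
        ≤ (m.primeFactorsList.length : ℝ) * Real.log ((Y:ℝ)+1) :=
          mul_le_mul_of_nonneg_left hYlog (by positivity)
      _ ≤ Real.log w := h3
  have hnr0 : n / smPart Y n ≠ 0 := by
    intro h0
    have := Nat.mul_div_cancel' (smPart_dvd Y n)
    rw [h0, mul_zero] at this
    exact hn0 this.symm
  have hnrQ : ((n / smPart Y n : ℕ) : ℝ) ≤ Q := by
    calc ((n / smPart Y n : ℕ) : ℝ) ≤ (n:ℝ) := by exact_mod_cast Nat.div_le_self _ _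
      _ ≤ Q := hnQ
  have hNlen : (n / smPart Y n).primeFactorsList.length ≤ N := by
    have h1 := key_len (n / smPart Y n) hnr0
      (fun q hq => roughPart_primes_gt Y hn0 q (Nat.prime_of_mem_primeFactors hq)
        (Nat.dvd_of_mem_primeFactors hq)) Q hnrQ
    have h2 : ((n / smPart Y n).primeFactorsList.length : ℝ) ≤ L/(u-3*v) := by
      rw [le_div_iff₀ huv]; exact h1
    have h3 : ((n / smPart Y n).primeFactorsList.length : ℝ) ≤ (N:ℝ) := h2.trans hNge
    exact_mod_cast h3
  have hE : ∀ pp : ℕ, n.factorization pp ≤ E := by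
    intro pp
    by_cases hpp : pp.Prime
    · have hd : pp ^ n.factorization pp ∣ n := Nat.ordProj_dvd n pp
      have h1 : 2 ^ n.factorization pp ≤ n :=
        le_trans (Nat.pow_le_pow_left hpp.two_le _) (Nat.le_of_dvd hn hd)
      exact (Nat.le_log_iff_pow_le (by norm_num) hn0).mpr h1
    · rw [Nat.factorization_eq_zero_of_not_prime n hpp]; exact Nat.zero_le _
  have hEle : (E:ℝ) ≤ L / Real.log 2 := by
    have h1 : (2:ℕ) ^ E ≤ n := Nat.pow_log_le_self 2 hn0
    have h2 : ((2:ℝ)) ^ E ≤ (n:ℝ) := by exact_mod_cast h1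
    have h3 : Real.log ((2:ℝ) ^ E) ≤ Real.log n := Real.log_le_log (by positivity) h2
    rw [Real.log_pow] at h3
    rw [le_div_iff₀ (Real.log_pos (by norm_num))]
    calc (E:ℝ) * Real.log 2 ≤ Real.log n := h3
      _ ≤ L := hlogn
  -- counts
  have hsplit := split_card n Y hn0 z
  have hA := smooth_card n Y E hn0 hE
  set A := n.divisors.filter (fun s : ℕ => ∀ q ∈ s.primeFactors, q ≤ Y) with hAdef
  set B := n.divisors.filter (fun t : ℕ => (∀ q ∈ t.primeFactors, Y < q) ∧ (t : ℝ) ≤ z) with hBdef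
  -- rough-part count, in both cases
  have hBreal : (B.card : ℝ) ≤ ((N:ℝ)+1) * Real.exp ((N:ℝ) * H) := by
    by_cases hcase : δ ≤ 1/2
    · have hpe : p = δ := by rw [hpdef]; exact min_eq_left hcase
      set J : ℕ := ⌊δ * (N:ℝ)⌋₊ with hJdef
      have hJt : ∀ t ∈ B, t.primeFactorsList.length ≤ J := by
        intro t ht
        rw [hBdef, Finset.mem_filter, Nat.mem_divisors] at ht
        obtain ⟨⟨htn, _⟩, hrough, htz⟩ := ht
        have ht0 : t ≠ 0 := by rintro rfl; exact hn0 (Nat.eq_zero_of_zero_dvd htn)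
        have h1 := key_len t ht0 hrough z htz
        have h2 : (t.primeFactorsList.length : ℝ) * (u - 3*v) ≤ δ * L := h1.trans hlogz
        have h3 : (t.primeFactorsList.length : ℝ) ≤ δ * L / (u-3*v) := by
          rw [le_div_iff₀ huv]; exact h2
        have h4 : (t.primeFactorsList.length : ℝ) ≤ δ * (N:ℝ) := by
          calc (t.primeFactorsList.length : ℝ) ≤ δ * L / (u-3*v) := h3
            _ = δ * (L / (u-3*v)) := by ring
            _ ≤ δ * (N:ℝ) := mul_le_mul_of_nonneg_left hNge hδ.le
        exact Nat.le_floor h4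
      have hBc := rough_card n Y J N hn0 z hJt hNlen
      have hJle : (J:ℝ) ≤ δ * (N:ℝ) := Nat.floor_le (by positivity)
      have hsum := aux_sum_choose_le N J δ hδ hcase hJle
      have hJN : (J:ℝ) + 1 ≤ (N:ℝ) + 1 := by
        have h5 : (J:ℝ) ≤ (N:ℝ) :=
          le_trans hJle (by calc δ * (N:ℝ) ≤ 1 * (N:ℝ) :=
              mul_le_mul_of_nonneg_right (by linarith) (Nat.cast_nonneg N)
            _ = (N:ℝ) := one_mul _)
        linarith
      calc (B.card : ℝ) ≤ (((∑ i ∈ range (J+1), N.choose i : ℕ)) : ℝ) := by exact_mod_cast hBc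
        _ = ∑ i ∈ range (J+1), (N.choose i : ℝ) := by push_cast; rfl
        _ ≤ ((J:ℝ)+1) * Real.exp ((N:ℝ) * (δ * Real.log (1/δ) + (1-δ) * Real.log (1/(1-δ)))) := hsum
        _ ≤ ((N:ℝ)+1) * Real.exp ((N:ℝ) * H) := by
            rw [hHdef, hpe]
            exact mul_le_mul_of_nonneg_right hJN (Real.exp_nonneg _)
    · push_neg at hcase
      have hpe : p = 1/2 := by rw [hpdef]; exact min_eq_right hcase.le
      have hJt : ∀ t ∈ B, t.primeFactorsList.length ≤ N := by
        intro t ht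
        rw [hBdef, Finset.mem_filter, Nat.mem_divisors] at ht
        obtain ⟨⟨htn, _⟩, hrough, htz⟩ := ht
        have ht0 : t ≠ 0 := by rintro rfl; exact hn0 (Nat.eq_zero_of_zero_dvd htn)
        have htQ : (t:ℝ) ≤ Q := by
          calc (t:ℝ) ≤ (n:ℝ) := by exact_mod_cast Nat.le_of_dvd hn htn
            _ ≤ Q := hnQ
        have h1 := key_len t ht0 hrough Q htQ
        have h2 : (t.primeFactorsList.length : ℝ) ≤ L/(u-3*v) := by
          rw [le_div_iff₀ huv]; exact h1
        have h3 : (t.primeFactorsList.length : ℝ) ≤ (N:ℝ) := h2.trans hNge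
        exact_mod_cast h3
      have hBc := rough_card n Y N N hn0 z hJt hNlen
      have hsum := aux_sum_choose_all N
      calc (B.card : ℝ) ≤ (((∑ i ∈ range (N+1), N.choose i : ℕ)) : ℝ) := by exact_mod_cast hBc
        _ = ∑ i ∈ range (N+1), (N.choose i : ℝ) := by push_cast; rfl
        _ ≤ Real.exp ((N:ℝ) * ((1/2) * Real.log (1/(1/2)) + (1-(1/2)) * Real.log (1/(1-(1/2))))) := hsum
        _ = Real.exp ((N:ℝ) * H) := by rw [hHdef, hpe]
        _ ≤ ((N:ℝ)+1) * Real.exp ((N:ℝ) * H) :=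
            le_mul_of_one_le_left (Real.exp_nonneg _)
              (by linarith [(Nat.cast_nonneg N : (0:ℝ) ≤ (N:ℝ))])
  -- smooth count, real form
  have hlogL2 : (0:ℝ) ≤ Real.log (L / Real.log 2 + 1) := by
    apply Real.log_nonneg
    have : (0:ℝ) ≤ L / Real.log 2 := by positivity
    linarith
  have hAreal : (A.card : ℝ) ≤ Real.exp ((L/u^3+1) * Real.log (L / Real.log 2 + 1)) := by
    have h1 : (A.card : ℝ) ≤ ((E:ℝ)+1) ^ (Y+1) := by
      calc (A.card : ℝ) ≤ (((E+1) ^ (Y+1) : ℕ) : ℝ) := by exact_mod_cast hA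
        _ = ((E:ℝ)+1) ^ (Y+1) := by push_cast; ring
    have h2 : ((E:ℝ)+1) ^ (Y+1) ≤ (L / Real.log 2 + 1) ^ (Y+1) := by
      apply pow_le_pow_left₀ (by positivity)
      linarith
    have h3 : (L / Real.log 2 + 1) ^ (Y+1) =
        Real.exp (((Y:ℝ)+1) * Real.log (L / Real.log 2 + 1)) := by
      rw [← Real.exp_log (x := (L / Real.log 2 + 1) ^ (Y+1)) (by positivity), Real.log_pow]
      congr 1; push_cast; ring
    calc (A.card : ℝ) ≤ (L / Real.log 2 + 1) ^ (Y+1) := h1.trans h2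
      _ = Real.exp (((Y:ℝ)+1) * Real.log (L / Real.log 2 + 1)) := h3
      _ ≤ Real.exp ((L/u^3+1) * Real.log (L / Real.log 2 + 1)) := by
          apply Real.exp_le_exp.mpr
          apply mul_le_mul_of_nonneg_right _ hlogL2
          linarith
  -- numeric core
  have hlog2half : (1/2:ℝ) ≤ Real.log 2 := by
    have := Real.log_two_gt_d9; linarith
  have hlog3 : Real.log 3 ≤ 2 := by
    have := Real.log_le_sub_one_of_pos (by norm_num : (0:ℝ) < 3); linarith
  have hlog3L : ∀ w : ℝ, 0 < w → w ≤ 3*L → Real.log w ≤ 3*u := by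
    intro w hw0 hw
    calc Real.log w ≤ Real.log (3*L) := Real.log_le_log hw0 hw
      _ = Real.log 3 + u := by rw [Real.log_mul (by norm_num) (ne_of_gt hL0)]
      _ ≤ 2 + u := by linarith
      _ ≤ 3*u := by linarith
  have ha_log : Real.log (L / Real.log 2 + 1) ≤ 3*u := by
    apply hlog3L _ (by positivity)
    have h1 : L / Real.log 2 ≤ 2*L := by
      rw [div_le_iff₀ (Real.log_pos (by norm_num))]; nlinarith
    linarith
  have hb_log : Real.log (L + 2) ≤ 3*u := by
    apply hlog3L _ (by linarith)
    linarith
  have h2' : 3*u ≤ (η/8) * (L/u) := by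
    have e : (η/8) * (L/u) = (η/8*L)/u := by ring
    rw [e, le_div_iff₀ hu0]
    calc 3*u*u = 3*u^2 := by ring
      _ ≤ η/8*L := f4
  have h1' : 3*L/u^2 ≤ (η/8) * (L/u) := by
    rw [div_le_iff₀ (by positivity : (0:ℝ) < u^2)]
    have e : η/8 * (L/u) * u^2 = η/8 * u * L := by field_simp
    rw [e]
    have h6 : (3:ℝ) ≤ η/8*u := by linarith
    calc 3*L = 3*L := rfl
      _ ≤ (η/8*u)*L := mul_le_mul_of_nonneg_right h6 hL0.le
      _ = η/8*u*L := by ring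
  have h3' : 3*L*v/(u*(u-3*v)) ≤ (η/4) * (L/u) := by
    rw [div_le_iff₀ (by positivity : (0:ℝ) < u*(u-3*v))]
    have e : η/4 * (L/u) * (u*(u-3*v)) = η/4 * L * (u-3*v) := by field_simp
    rw [e]
    have h7 : 3*v ≤ η/4*(u-3*v) := by linarith
    calc 3*L*v = (3*v)*L := by ring
      _ ≤ (η/4*(u-3*v))*L := mul_le_mul_of_nonneg_right h7 hL0.le
      _ = η/4*L*(u-3*v) := by ring
  have h4' : (1:ℝ) ≤ (η/8) * (L/u) := by
    have : (1:ℝ) ≤ 3*u := by linarith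
    linarith [h2']
  have ha' : (L/u^3+1) * Real.log (L / Real.log 2 + 1) ≤ 3*L/u^2 + 3*u := by
    have e : (L/u^3+1) * (3*u) = 3*L/u^2 + 3*u := by field_simp
    calc (L/u^3+1) * Real.log (L / Real.log 2 + 1) ≤ (L/u^3+1) * (3*u) :=
          mul_le_mul_of_nonneg_left ha_log (by positivity)
      _ = 3*L/u^2 + 3*u := e
  -- combine
  set D : ℝ := 3*L*v/(u*(u-3*v)) with hDdef
  have hD0 : (0:ℝ) ≤ D := by positivity
  have hdiff : L/(u-3*v) = L/u + D := by
    rw [hDdef]; field_simp; ring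
  clear_value D
  have hNH : (N:ℝ) * H ≤ H * (L/u) + D + 1 := by
    have h1 : (N:ℝ) * H ≤ (L/(u-3*v) + 1) * H := mul_le_mul_of_nonneg_right hNle hH0
    have h2 : (L/(u-3*v) + 1) * H = H * (L/u) + D * H + H := by rw [hdiff]; ring
    have h8 : D * H ≤ D := mul_le_of_le_one_right hD0 hH1
    calc (N:ℝ) * H ≤ (L/(u-3*v) + 1) * H := h1
      _ = H * (L/u) + D * H + H := h2
      _ ≤ H * (L/u) + D + 1 := by linarith

  have hfinal : (L/u^3+1) * Real.log (L / Real.log 2 + 1) + Real.log (L + 2) + (N:ℝ) * H ≤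
      (H + η) * (L/u) := by
    have : (L/u^3+1) * Real.log (L / Real.log 2 + 1) + Real.log (L + 2) + D + 1 ≤ η * (L/u) := by
      have hb' : Real.log (L + 2) ≤ (η/8) * (L/u) := le_trans hb_log h2'
      have haa : (L/u^3+1) * Real.log (L / Real.log 2 + 1) ≤ (η/4) * (L/u) := by
        calc (L/u^3+1) * Real.log (L / Real.log 2 + 1) ≤ 3*L/u^2 + 3*u := ha'
          _ ≤ (η/8) * (L/u) + (η/8) * (L/u) := add_le_add h1' h2'
          _ = (η/4) * (L/u) := by ring
      linarith [h3', h4']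
    linarith [hNH]
  -- final chain
  have hNplus : (N:ℝ) + 1 ≤ Real.exp (Real.log (L + 2)) := by
    rw [Real.exp_log (by linarith)]
    have : L/(u-3*v) ≤ L := by
      rw [div_le_iff₀ huv]
      calc L = L*1 := (mul_one L).symm
        _ ≤ L*(u-3*v) := mul_le_mul_of_nonneg_left (by linarith) hL0.le
    linarith [hNle]
  calc ((n.divisors.filter (fun d : ℕ => (d : ℝ) ≤ z)).card : ℝ)
      ≤ (A.card : ℝ) * (B.card : ℝ) := by exact_mod_cast hsplit
    _ ≤ Real.exp ((L/u^3+1) * Real.log (L / Real.log 2 + 1)) *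
        (((N:ℝ)+1) * Real.exp ((N:ℝ) * H)) := by
        apply mul_le_mul hAreal hBreal (Nat.cast_nonneg _) (Real.exp_nonneg _)
    _ ≤ Real.exp ((L/u^3+1) * Real.log (L / Real.log 2 + 1)) *
        (Real.exp (Real.log (L + 2)) * Real.exp ((N:ℝ) * H)) := by
        apply mul_le_mul_of_nonneg_left _ (Real.exp_nonneg _)
        exact mul_le_mul_of_nonneg_right hNplus (Real.exp_nonneg _)
    _ = Real.exp ((L/u^3+1) * Real.log (L / Real.log 2 + 1) + Real.log (L + 2) + (N:ℝ) * H) := by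
        rw [← Real.exp_add, ← Real.exp_add]; congr 1; ring
    _ ≤ Real.exp ((H + η) * (L/u)) := Real.exp_le_exp.mpr hfinal
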